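/- Let G be a graph and let G* be obtained from G by a Kelmans transformation on two specified vertices u, v. Then ρ(G) ≤ ρ(G*). -/

import Mathlib

open SimpleGraph
open scoped Classical

/-- A graph is Hamilton-connected if every two distinct vertices are joined by a Hamilton path. -/
def HamiltonConnected {V : Type*} (G : SimpleGraph V) : Prop :=
  ∀ u v : V, u ≠ v → ∃ p : G.Walk u v, p.IsHamiltonian

/-- The real adjacency matrix of a graph. -/
noncomputable def adjMat {V : Type*} (G : SimpleGraph V) : Matrix V V ℝ :=
  fun i j => if G.Adj i j then 1 else 0

/-- The signless Laplacian matrix `Q(G) = D(G) + A(G)`. -/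
noncomputable def signlessLap {V : Type*} [Fintype V] (G : SimpleGraph V) : Matrix V V ℝ :=
  Matrix.diagonal (fun v => ((G.neighborSet v).ncard : ℝ)) + adjMat G

/-- The spectral radius of a graph: the largest eigenvalue of its adjacency matrix. -/
noncomputable def specRad {V : Type*} [Fintype V] (G : SimpleGraph V) : ℝ :=
  sSup {μ : ℝ | ∃ x : V → ℝ, x ≠ 0 ∧ (adjMat G).mulVec x = μ • x}

/-- The signless Laplacian spectral radius of a graph. -/
noncomputable def qRad {V : Type*} [Fintype V] (G : SimpleGraph V) : ℝ :=
  sSup {μ : ℝ | ∃ x : V → ℝ, x ≠ 0 ∧ (signlessLap G).mulVec x = μ • x}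

/-- The join `G ∨ H` of two graphs. -/
def djoin {α β : Type*} (G : SimpleGraph α) (H : SimpleGraph β) : SimpleGraph (α ⊕ β) :=
  SimpleGraph.fromRel (fun x y =>
    (∃ a b, G.Adj a b ∧ x = Sum.inl a ∧ y = Sum.inl b) ∨
    (∃ a b, H.Adj a b ∧ x = Sum.inr a ∧ y = Sum.inr b) ∨
    (∃ a b, x = Sum.inl a ∧ y = Sum.inr b))

/-- `S_n^k = K_k ∨ (K_{n-(2k-1)} + (k-1)K_1)`. -/
def Sgraph (n k : ℕ) : SimpleGraph (Fin k ⊕ (Fin (n - (2 * k - 1)) ⊕ Fin (k - 1))) :=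
  djoin ⊤ ((⊤ : SimpleGraph (Fin (n - (2 * k - 1)))) ⊕g (⊥ : SimpleGraph (Fin (k - 1))))

/-- `T_n^k = K_2 ∨ (K_{n-(k+1)} + K_{k-1})`. -/
def Tgraph (n k : ℕ) : SimpleGraph (Fin 2 ⊕ (Fin (n - (k + 1)) ⊕ Fin (k - 1))) :=
  djoin ⊤ ((⊤ : SimpleGraph (Fin (n - (k + 1)))) ⊕g (⊤ : SimpleGraph (Fin (k - 1))))

/-- `G` is (isomorphic to) a graph obtained from `S` by deleting exactly `t` edges, keeping
minimum degree at least 3. -/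
def DelFam {α β : Type*} (S : SimpleGraph β) (t : ℕ) (G : SimpleGraph α) : Prop :=
  ∃ H : SimpleGraph β, H ≤ S ∧ (S.edgeSet \ H.edgeSet).ncard = t ∧
    (∀ v, 3 ≤ (H.neighborSet v).ncard) ∧ Nonempty (G ≃g H)

/-- The graph `K_{n-1} + e + e'`: a complete graph on `n-1` vertices together with one extra
vertex joined to two vertices of the complete graph by the edges `e` and `e'`. -/
def KnEE (n : ℕ) : SimpleGraph (Fin (n - 1) ⊕ Fin 1) :=
  SimpleGraph.fromRel (fun x y =>
    (∃ a b : Fin (n - 1), x = Sum.inl a ∧ y = Sum.inl b) ∨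
    (∃ a : Fin (n - 1), (a : ℕ) ≤ 1 ∧ x = Sum.inl a ∧ ∃ b, y = Sum.inr b))

/-- The Kelmans transformation of `G` with respect to the vertices `u` and `v`: every edge
`vx` with `x ∈ N(v) \ N[u]` is replaced by the edge `ux`. -/
def kelmans {V : Type*} (G : SimpleGraph V) (u v : V) : SimpleGraph V :=
  SimpleGraph.fromRel (fun x y =>
    (x = u ∧ y ≠ v ∧ (G.Adj u y ∨ G.Adj v y)) ∨
    (x = v ∧ y ≠ u ∧ G.Adj v y ∧ G.Adj u y) ∨
    (x = u ∧ y = v ∧ G.Adj u v) ∨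
    (x ≠ u ∧ x ≠ v ∧ y ≠ u ∧ y ≠ v ∧ G.Adj x y))


section KelmansAux

open Matrix

variable {V : Type*} [Fintype V]

private lemma symm_dot_eigen (A : Matrix V V ℝ) (hA : Aᵀ = A)
    (x b : V → ℝ) (μ : ℝ) (hb : A.mulVec b = μ • b) :
    b ⬝ᵥ A.mulVec x = μ * (b ⬝ᵥ x) := by
  rw [Matrix.dotProduct_mulVec, ← Matrix.mulVec_transpose, hA, hb, smul_dotProduct]
  simp

private lemma exists_top_eigen [Nonempty V] (A : Matrix V V ℝ)
    (hA : A.IsHermitian) :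
    ∃ μ : ℝ, (∃ b : V → ℝ, b ≠ 0 ∧ A.mulVec b = μ • b) ∧
      ∀ x : V → ℝ, x ⬝ᵥ A.mulVec x ≤ μ * (x ⬝ᵥ x) := by
  have hAt : Aᵀ = A := by ext i j; simpa using hA.apply i j
  obtain ⟨i₀, -, hmax⟩ := Finset.exists_max_image Finset.univ hA.eigenvalues
    ⟨Classical.arbitrary V, Finset.mem_univ _⟩
  set lam : V → ℝ := hA.eigenvalues with hlam
  have hbe : ∀ i, A.mulVec (fun j => hA.eigenvectorBasis i j) = lam i • (fun j => hA.eigenvectorBasis i j) :=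
    fun i => hA.mulVec_eigenvectorBasis i
  set c : V → V → ℝ := fun i => fun j => hA.eigenvectorBasis i j with hc
  have hbne : c i₀ ≠ 0 := by
    intro h0
    exact hA.eigenvectorBasis.orthonormal.ne_zero i₀ (by ext j; exact congrFun h0 j)
  refine ⟨lam i₀, ⟨c i₀, hbne, hbe i₀⟩, ?_⟩
  intro x
  have hpar : ∀ y : V → ℝ, x ⬝ᵥ y = ∑ i, ((x ⬝ᵥ c i) * (c i ⬝ᵥ y)) := by
    intro y
    have h := hA.eigenvectorBasis.sum_inner_mul_inner (WithLp.toLp 2 x : EuclideanSpace ℝ V)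
      (WithLp.toLp 2 (y : V → ℝ) : EuclideanSpace ℝ V)
    simp only [EuclideanSpace.inner_eq_star_dotProduct, star_trivial, WithLp.ofLp_toLp] at h
    rw [dotProduct_comm x y, ← h]
    exact Finset.sum_congr rfl fun i _ => by rw [mul_comm, dotProduct_comm x, dotProduct_comm y]; exact mul_comm _ _
  rw [hpar (A.mulVec x), hpar x, Finset.mul_sum]
  apply Finset.sum_le_sum
  intro i _
  rw [symm_dot_eigen A hAt x (c i) (lam i) (hbe i)]
  have hsq : x ⬝ᵥ c i = c i ⬝ᵥ x := dotProduct_comm _ _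
  have h2 : (0:ℝ) ≤ x ⬝ᵥ c i * (c i ⬝ᵥ x) := by rw [hsq]; exact mul_self_nonneg _
  have h3 : lam i ≤ lam i₀ := hmax i (Finset.mem_univ i)
  nlinarith [h2, h3]

private lemma dot_mulVec_eq_sum (A : Matrix V V ℝ) (x : V → ℝ) :
    x ⬝ᵥ A.mulVec x = ∑ i, ∑ j, A i j * x i * x j := by
  simp only [dotProduct, Matrix.mulVec, Finset.mul_sum]
  exact Finset.sum_congr rfl fun i _ => Finset.sum_congr rfl fun j _ => by ring

private lemma core_ineq (B C : Matrix V V ℝ) (u v : V) (y : V → ℝ)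
    (huv : u ≠ v)
    (hB : ∀ i j, B i j = B j i) (hC : ∀ i j, C i j = C j i)
    (huu : C u u = B u u) (hvv : C v v = B v v) (hcuv : C u v = B u v)
    (hsum : ∀ w, w ≠ u → w ≠ v → B u w + B v w = C u w + C v w)
    (hoff : ∀ i j, i ≠ u → i ≠ v → j ≠ u → j ≠ v → B i j = C i j)
    (hd : ∀ w, C u w ≤ B u w)
    (hy : ∀ i, 0 ≤ y i) (hyvu : y v ≤ y u) :
    ∑ i, ∑ j, C i j * y i * y j ≤ ∑ i, ∑ j, B i j * y i * y j := by
  set d : V → ℝ := fun j => B u j - C u j with hdef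
  have hdu : d u = 0 := by simp [hdef, huu]
  have hdv : d v = 0 := by simp [hdef, hcuv]
  set E : Matrix V V ℝ := fun i j => if i = u then d j else if i = v then -(d j) else 0 with hE
  have hEu : ∀ j, E u j = d j := fun j => by simp [hE]
  have hEv : ∀ j, E v j = -(d j) := fun j => by simp [hE, Ne.symm huv]
  have hEo : ∀ i j, i ≠ u → i ≠ v → E i j = 0 := fun i j h1 h2 => by simp [hE, h1, h2]
  have hBC : ∀ i j, B i j = C i j + (E i j + E j i) := by
    intro i j
    rcases eq_or_ne i u with hiu | hiu
    · rw [hiu]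
      rcases eq_or_ne j u with hju | hju
      · rw [hju, hEu]; linarith [hdu, huu]
      · rcases eq_or_ne j v with hjv | hjv
        · rw [hjv, hEu, hEv]; linarith [hdv, hdu, hcuv]
        · rw [hEu, hEo j u hju hjv]; simp [hdef]
    · rcases eq_or_ne i v with hiv | hiv
      · rw [hiv]
        rcases eq_or_ne j u with hju | hju
        · rw [hju, hEv, hEu]
          have h1 := hB v u
          have h2 := hC v u
          linarith [hcuv, hB u v, hC u v, hdu, hdv]
        · rcases eq_or_ne j v with hjv | hjv
          · rw [hjv, hEv]; linarith [hdv, hvv]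
          · rw [hEv, hEo j v hju hjv]
            have := hsum j hju hjv
            simp only [hdef]
            linarith
      · rcases eq_or_ne j u with hju | hju
        · rw [hju, hEu, hEo i u hiu hiv]
          rw [hB i u, hC i u]
          simp [hdef]
        · rcases eq_or_ne j v with hjv | hjv
          · rw [hjv, hEv, hEo i v hiu hiv]
            rw [hB i v, hC i v]
            have := hsum i hiu hiv
            simp only [hdef]
            linarith
          · rw [hEo i j hiu hiv, hEo j i hju hjv, hoff i j hiu hiv hju hjv]; ring
  have hT : ∑ i, ∑ j, E i j * y i * y j = ∑ j, d j * (y u - y v) * y j := by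
    have h1 : ∀ i, (∑ j, E i j * y i * y j)
        = (if i = u then ∑ j, d j * y u * y j else 0)
          + (if i = v then -(∑ j, d j * y v * y j) else 0) := by
      intro i
      rcases eq_or_ne i u with hiu | hiu
      · rw [hiu, if_pos rfl, if_neg huv]
        rw [add_zero]
        exact Finset.sum_congr rfl fun j _ => by rw [hEu]
      · rcases eq_or_ne i v with hiv | hiv
        · rw [hiv, if_neg (Ne.symm huv), if_pos rfl, zero_add, ← Finset.sum_neg_distrib]
          exact Finset.sum_congr rfl fun j _ => by rw [hEv]; ring
        · rw [if_neg hiu, if_neg hiv, add_zero]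
          exact Finset.sum_eq_zero fun j _ => by rw [hEo i j hiu hiv]; ring
    rw [Finset.sum_congr rfl fun i _ => h1 i, Finset.sum_add_distrib,
      Finset.sum_ite_eq' Finset.univ u (fun _ => ∑ j, d j * y u * y j),
      Finset.sum_ite_eq' Finset.univ v (fun _ => -(∑ j, d j * y v * y j))]
    simp only [Finset.mem_univ, if_pos, ← Finset.sum_neg_distrib, ← Finset.sum_add_distrib]
    exact Finset.sum_congr rfl fun j _ => by ring
  have hTnn : 0 ≤ ∑ j, d j * (y u - y v) * y j := by
    apply Finset.sum_nonneg
    intro j _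
    have h1 : 0 ≤ d j := sub_nonneg.mpr (hd j)
    have h2 : 0 ≤ y u - y v := by linarith
    exact mul_nonneg (mul_nonneg h1 h2) (hy j)
  have hsplit : ∑ i, ∑ j, B i j * y i * y j
      = ∑ i, ∑ j, C i j * y i * y j + 2 * ∑ j, d j * (y u - y v) * y j := by
    have hterm : ∀ i j, B i j * y i * y j
        = C i j * y i * y j + (E i j * y i * y j + E j i * y i * y j) := by
      intro i j; rw [hBC i j]; ring
    rw [Finset.sum_congr rfl fun i _ => Finset.sum_congr rfl fun j _ => hterm i j]
    simp only [Finset.sum_add_distrib]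
    have hswap : ∑ i, ∑ j, E j i * y i * y j = ∑ i, ∑ j, E i j * y i * y j := by
      rw [Finset.sum_comm]
      exact Finset.sum_congr rfl fun i _ => Finset.sum_congr rfl fun j _ => by ring
    rw [hswap, hT]; ring
  linarith

variable (G : SimpleGraph V) (u v : V)

private lemma kel_self' : kelmans G u u = G := by
  ext i j
  simp only [kelmans, SimpleGraph.fromRel_adj]
  constructor
  · rintro ⟨hij, h | h⟩
    · rcases h with ⟨rfl, -, h | h⟩ | ⟨rfl, -, h, -⟩ | ⟨rfl, rfl, h⟩ | ⟨-, -, -, -, h⟩ <;> exact h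
    · rcases h with ⟨rfl, -, h | h⟩ | ⟨rfl, -, h, -⟩ | ⟨rfl, rfl, h⟩ | ⟨-, -, -, -, h⟩ <;> exact h.symm
  · intro h
    refine ⟨h.ne, ?_⟩
    rcases eq_or_ne i u with rfl | hiu
    · exact Or.inl (Or.inl ⟨rfl, fun hj => h.ne (hj ▸ rfl), Or.inl h⟩)
    · rcases eq_or_ne j u with rfl | hju
      · exact Or.inr (Or.inl ⟨rfl, hiu, Or.inl h.symm⟩)
      · exact Or.inl (Or.inr (Or.inr (Or.inr ⟨hiu, hiu, hju, hju, h⟩)))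

private lemma kel_adj_uw (huv : u ≠ v) {w : V} (hwu : w ≠ u) (hwv : w ≠ v) :
    (kelmans G u v).Adj u w ↔ (G.Adj u w ∨ G.Adj v w) := by
  simp [kelmans, SimpleGraph.fromRel_adj, hwu, hwv, huv, Ne.symm hwu, Ne.symm hwv, Ne.symm huv]

private lemma kel_adj_vw (huv : u ≠ v) {w : V} (hwu : w ≠ u) (hwv : w ≠ v) :
    (kelmans G u v).Adj v w ↔ (G.Adj u w ∧ G.Adj v w) := by
  simp [kelmans, SimpleGraph.fromRel_adj, hwu, hwv, huv, Ne.symm hwu, Ne.symm hwv, Ne.symm huv]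
  tauto

private lemma kel_adj_uv (huv : u ≠ v) : (kelmans G u v).Adj u v ↔ G.Adj u v := by
  simp [kelmans, SimpleGraph.fromRel_adj, huv, Ne.symm huv]

private lemma kel_adj_off {i j : V} (hiu : i ≠ u) (hiv : i ≠ v) (hju : j ≠ u) (hjv : j ≠ v) :
    (kelmans G u v).Adj i j ↔ G.Adj i j := by
  simp [kelmans, SimpleGraph.fromRel_adj, hiu, hiv, hju, hjv]
  constructor
  · rintro ⟨-, h | h⟩
    · exact h
    · exact h.symm
  · exact fun h => ⟨h.ne, Or.inl h⟩

private lemma adjMat_symm_entry (i j : V) : adjMat G i j = adjMat G j i := by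
  simp [adjMat, SimpleGraph.adj_comm]

private lemma adjMat_isHermitian : (adjMat G).IsHermitian := by
  ext i j
  simp [Matrix.conjTranspose_apply, adjMat, SimpleGraph.adj_comm]

private lemma adjMat_nonneg (i j : V) : 0 ≤ adjMat G i j := by
  unfold adjMat; split <;> norm_num

private lemma dot_self_pos {x : V → ℝ} (hx : x ≠ 0) : 0 < x ⬝ᵥ x := by
  have h : ∃ j, x j ≠ 0 := by
    by_contra hplain
    push_neg at hplain
    exact hx (funext fun j => hplain j)
  obtain ⟨j, hj⟩ := h
  exact Finset.sum_pos' (fun i _ => mul_self_nonneg (x i))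
    ⟨j, Finset.mem_univ j, mul_self_pos.mpr hj⟩

private lemma quad_le_specRad (x : V → ℝ) :
    x ⬝ᵥ (adjMat G).mulVec x ≤ specRad G * (x ⬝ᵥ x) := by
  by_cases hV : Nonempty V
  · obtain ⟨μ, hmem, hbound⟩ := exists_top_eigen (adjMat G) (adjMat_isHermitian G)
    have hbdd : BddAbove {μ : ℝ | ∃ x : V → ℝ, x ≠ 0 ∧ (adjMat G).mulVec x = μ • x} := by
      refine ⟨μ, ?_⟩
      rintro ν ⟨z, hz, hze⟩
      have h1 : z ⬝ᵥ (adjMat G).mulVec z = ν * (z ⬝ᵥ z) := by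
        rw [hze]
        simp [dotProduct_smul, smul_eq_mul]
      have h2 := hbound z
      have h3 := dot_self_pos hz
      nlinarith
    have hle : μ ≤ specRad G := le_csSup hbdd hmem
    have h4 := hbound x
    have h5 : 0 ≤ x ⬝ᵥ x := Finset.sum_nonneg fun i _ => mul_self_nonneg (x i)
    calc x ⬝ᵥ (adjMat G).mulVec x ≤ μ * (x ⬝ᵥ x) := h4
      _ ≤ specRad G * (x ⬝ᵥ x) := mul_le_mul_of_nonneg_right hle h5
  · haveI := not_nonempty_iff.mp hV
    simp [dotProduct, Finset.univ_eq_empty]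

private lemma specRad_nonneg' [Nonempty V] : 0 ≤ specRad G := by
  obtain ⟨j⟩ := (inferInstance : Nonempty V)
  have hq := quad_le_specRad G (Pi.single j 1)
  have h1 : (Pi.single j 1 : V → ℝ) ⬝ᵥ (adjMat G).mulVec (Pi.single j 1) = 0 := by
    rw [dot_mulVec_eq_sum]
    apply Finset.sum_eq_zero
    intro i _
    apply Finset.sum_eq_zero
    intro k _
    rcases eq_or_ne i j with rfl | hij
    · rcases eq_or_ne k i with rfl | hk
      · simp [adjMat]
      · simp [Pi.single_apply, hk]
    · simp [Pi.single_apply, hij]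
  have h2 : (Pi.single j 1 : V → ℝ) ⬝ᵥ (Pi.single j 1 : V → ℝ) = 1 := by
    simp [dotProduct, Pi.single_apply]
  rw [h1, h2, mul_one] at hq
  exact hq

end KelmansAux

open Matrix

theorem statement_14 {V : Type*} [Fintype V] (G : SimpleGraph V) (u v : V) :
    specRad G ≤ specRad (kelmans G u v) := by
  classical
  rcases eq_or_ne u v with rfl | huv
  · rw [kel_self' G u]
  by_cases hV : Nonempty V
  swap
  · haveI := not_nonempty_iff.mp hV
    have he : ∀ H : SimpleGraph V, specRad H = 0 := by
      intro H
      unfold specRad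
      have : {μ : ℝ | ∃ x : V → ℝ, x ≠ 0 ∧ (adjMat H).mulVec x = μ • x} = ∅ := by
        ext μ
        simp only [Set.mem_setOf_eq, Set.mem_empty_iff_false, iff_false, not_exists]
        intro x hx
        exact hx.1 (Subsingleton.elim x 0)
      rw [this, Real.sSup_empty]
    rw [he, he]
  apply Real.sSup_le
  swap
  · exact specRad_nonneg' (kelmans G u v)
  rintro μ ⟨x, hx, hxe⟩
  set A := adjMat G with hA
  set B := adjMat (kelmans G u v) with hB
  set z : V → ℝ := fun i => |x i| with hz
  have hznn : ∀ i, 0 ≤ z i := fun i => abs_nonneg _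
  have hs : x ⬝ᵥ x = z ⬝ᵥ z := by
    apply Finset.sum_congr rfl
    intro i _
    rw [hz]
    exact (abs_mul_abs_self (x i)).symm
  have hspos : 0 < x ⬝ᵥ x := dot_self_pos hx
  have h1 : μ * (x ⬝ᵥ x) = x ⬝ᵥ A.mulVec x := by
    rw [hxe]
    simp [dotProduct_smul, smul_eq_mul]
  have h2 : x ⬝ᵥ A.mulVec x ≤ z ⬝ᵥ A.mulVec z := by
    rw [dot_mulVec_eq_sum, dot_mulVec_eq_sum]
    apply Finset.sum_le_sum
    intro i _
    apply Finset.sum_le_sum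
    intro j _
    have hAnn : 0 ≤ A i j := adjMat_nonneg G i j
    have habs : x i * x j ≤ z i * z j := by
      rw [hz]
      calc x i * x j ≤ |x i * x j| := le_abs_self _
        _ = |x i| * |x j| := abs_mul _ _
    calc A i j * x i * x j = A i j * (x i * x j) := by ring
      _ ≤ A i j * (z i * z j) := mul_le_mul_of_nonneg_left habs hAnn
      _ = A i j * z i * z j := by ring
  -- facts about B
  have hBsym : ∀ i j, B i j = B j i := fun i j => adjMat_symm_entry _ i j
  have hAsym : ∀ i j, A i j = A j i := fun i j => adjMat_symm_entry _ i j
  have hBuu : B u u = 0 := by simp [hB, adjMat]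
  have hBvv : B v v = 0 := by simp [hB, adjMat]
  have hBuv : B u v = A u v := by simp [hB, hA, adjMat, kel_adj_uv G u v huv]
  have hBuw : ∀ w, w ≠ u → w ≠ v → B u w = (if G.Adj u w ∨ G.Adj v w then (1:ℝ) else 0) := by
    intro w hwu hwv
    simp [hB, adjMat, kel_adj_uw G u v huv hwu hwv]
  have hBvw : ∀ w, w ≠ u → w ≠ v → B v w = (if G.Adj u w ∧ G.Adj v w then (1:ℝ) else 0) := by
    intro w hwu hwv
    simp [hB, adjMat, kel_adj_vw G u v huv hwu hwv]
  have hBoff : ∀ i j, i ≠ u → i ≠ v → j ≠ u → j ≠ v → B i j = A i j := by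
    intro i j hiu hiv hju hjv
    simp [hB, hA, adjMat, kel_adj_off G u v hiu hiv hju hjv]
  have key : ∃ y : V → ℝ, (z ⬝ᵥ A.mulVec z ≤ y ⬝ᵥ B.mulVec y) ∧ y ⬝ᵥ y = z ⬝ᵥ z := by
    rcases le_or_gt (z v) (z u) with hcase | hcase
    · refine ⟨z, ?_, rfl⟩
      rw [dot_mulVec_eq_sum, dot_mulVec_eq_sum]
      apply core_ineq B A u v z huv hBsym hAsym
      · simp [hA, adjMat, hBuu]
      · simp [hA, adjMat, hBvv]
      · exact hBuv.symm
      · intro w hwu hwv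
        rw [hBuw w hwu hwv, hBvw w hwu hwv]
        by_cases hadj1 : G.Adj u w <;> by_cases hadj2 : G.Adj v w <;>
          simp [hA, adjMat, hadj1, hadj2]
      · intro i j hiu hiv hju hjv
        exact hBoff i j hiu hiv hju hjv
      · intro w
        rcases eq_or_ne w u with rfl | hwu
        · simp [hA, adjMat, hBuu]
        · rcases eq_or_ne w v with rfl | hwv
          · rw [hBuv]
          · rw [hBuw w hwu hwv]
            by_cases hadj1 : G.Adj u w <;> by_cases hadj2 : G.Adj v w <;>
              simp [hA, adjMat, hadj1, hadj2]
      · exact hznn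
      · exact hcase
    · set σ : Equiv.Perm V := Equiv.swap u v with hσ
      set y : V → ℝ := fun i => z (σ i) with hy
      set C : Matrix V V ℝ := fun i j => A (σ i) (σ j) with hCdef
      have hσu : σ u = v := Equiv.swap_apply_left u v
      have hσv : σ v = u := Equiv.swap_apply_right u v
      have hσw : ∀ w, w ≠ u → w ≠ v → σ w = w := fun w h1 h2 =>
        Equiv.swap_apply_of_ne_of_ne h1 h2
      have hzA : z ⬝ᵥ A.mulVec z = ∑ i, ∑ j, C i j * y i * y j := by
        rw [dot_mulVec_eq_sum]
        have hinner : ∀ i, ∑ j, C i j * y i * y j = ∑ j, A (σ i) j * z (σ i) * z j := by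
          intro i
          exact Equiv.sum_comp σ (fun j => A (σ i) j * z (σ i) * z j)
        rw [Finset.sum_congr rfl fun i _ => hinner i]
        exact (Equiv.sum_comp σ (fun i => ∑ j, A i j * z i * z j)).symm
      refine ⟨y, ?_, ?_⟩
      · rw [hzA, dot_mulVec_eq_sum]
        apply core_ineq B C u v y huv hBsym
        · intro i j
          simp only [hCdef]
          exact hAsym (σ i) (σ j)
        · simp [hCdef, hσu, hA, adjMat, hBuu]
        · simp [hCdef, hσv, hA, adjMat, hBvv]
        · simp only [hCdef, hσu, hσv]
          rw [hAsym v u, hBuv]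
        · intro w hwu hwv
          rw [hBuw w hwu hwv, hBvw w hwu hwv]
          simp only [hCdef, hσu, hσv, hσw w hwu hwv]
          by_cases hadj1 : G.Adj u w <;> by_cases hadj2 : G.Adj v w <;>
            simp [hA, adjMat, hadj1, hadj2]
        · intro i j hiu hiv hju hjv
          simp only [hCdef, hσw i hiu hiv, hσw j hju hjv]
          exact hBoff i j hiu hiv hju hjv
        · intro w
          rcases eq_or_ne w u with rfl | hwu
          · simp [hCdef, hσu, hA, adjMat, hBuu]
          · rcases eq_or_ne w v with hwv | hwv
            · rw [hwv]
              simp only [hCdef, hσu, hσv]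
              rw [hAsym v u, hBuv]
            · rw [hBuw w hwu hwv]
              simp only [hCdef, hσu, hσw w hwu hwv]
              by_cases hadj1 : G.Adj u w <;> by_cases hadj2 : G.Adj v w <;>
                simp [hA, adjMat, hadj1, hadj2]
        · intro i
          exact hznn (σ i)
        · simp only [hy, hσu, hσv]
          linarith
      · simp only [dotProduct, hy]
        exact Equiv.sum_comp σ (fun i => z i * z i)
  obtain ⟨y, hy1, hy2⟩ := key
  have h3 := quad_le_specRad (kelmans G u v) y
  rw [hy2, ← hs] at h3
  have hfinal : μ * (x ⬝ᵥ x) ≤ specRad (kelmans G u v) * (x ⬝ᵥ x) := by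
    rw [h1]
    calc x ⬝ᵥ A.mulVec x ≤ z ⬝ᵥ A.mulVec z := h2
      _ ≤ y ⬝ᵥ B.mulVec y := hy1
      _ ≤ specRad (kelmans G u v) * (x ⬝ᵥ x) := h3
  exact le_of_mul_le_mul_right hfinal hspos
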